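/- arXiv:1312.3122 — 2 statements merged into one kernel-verified Lean document; each statement's English description precedes it below -/
import Mathlib

section
/- Let f: 𝔻 → ℂ be three times continuously differentiable on the unit disk with Re[(Δf)_z · conj(f_z) + (Δf)_{z̄} · conj(f_{z̄})] ≥ 0. Then F = |f_z|² + |f_{z̄}|² is subharmonic on 𝔻; indeed Δ F = 4(|f_{zz}|² + |f_{z̄ z̄}|²) + (1/2)|Δf|² + 2·Re[(Δf)_z·conj(f_z) + (Δf)_{z̄}·conj(f_{z̄})] ≥ 0. -/
open Complex Metric

/-- The (real) Laplacian Δg = g_xx + g_yy of a function on ℂ. -/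
noncomputable def lap {E : Type*} [NormedAddCommGroup E] [NormedSpace ℝ E]
    (g : ℂ → E) (z : ℂ) : E :=
  fderiv ℝ (fun w => fderiv ℝ g w 1) z 1 +
    fderiv ℝ (fun w => fderiv ℝ g w Complex.I) z Complex.I

/-- Wirtinger derivative f_z = (f_x - i f_y)/2. -/
noncomputable def wd (f : ℂ → ℂ) (z : ℂ) : ℂ :=
  (fderiv ℝ f z 1 - Complex.I * fderiv ℝ f z Complex.I) / 2

/-- Wirtinger derivative f_z̄ = (f_x + i f_y)/2. -/
noncomputable def wdb (f : ℂ → ℂ) (z : ℂ) : ℂ :=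
  (fderiv ℝ f z 1 + Complex.I * fderiv ℝ f z Complex.I) / 2

noncomputable def pd {E : Type*} [NormedAddCommGroup E] [NormedSpace ℝ E]
    (v : ℂ) (g : ℂ → E) : ℂ → E := fun w => fderiv ℝ g w v

section helpers
variable {E : Type*} [NormedAddCommGroup E] [NormedSpace ℝ E]

lemma lap_eq (g : ℂ → E) (z : ℂ) :
    lap g z = pd 1 (pd 1 g) z + pd I (pd I g) z := rfl

lemma pd_contDiffAt {n : ℕ} {v : ℂ} {g : ℂ → E} {z : ℂ}
    (hg : ContDiffAt ℝ (n+1) g z) : ContDiffAt ℝ n (pd v g) z :=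
  (hg.fderiv_right (by norm_cast)).clm_apply contDiffAt_const

lemma pd_diffAt {v : ℂ} {g : ℂ → E} {z : ℂ}
    (hg : ContDiffAt ℝ 2 g z) : DifferentiableAt ℝ (pd v g) z := by
  have : ContDiffAt ℝ (1+1 : ℕ) g z := by exact_mod_cast hg
  exact (pd_contDiffAt (n := 1) this).differentiableAt (by norm_num)

lemma pd_pd {u v : ℂ} {g : ℂ → E} {z : ℂ} (hg : ContDiffAt ℝ 2 g z) :
    pd u (pd v g) z = fderiv ℝ (fderiv ℝ g) z u v := by
  have h1 : DifferentiableAt ℝ (fderiv ℝ g) z := by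
    have := hg.fderiv_right (m := 1) (by norm_num)
    exact this.differentiableAt one_ne_zero
  show fderiv ℝ (fun w => fderiv ℝ g w v) z u = _
  rw [fderiv_clm_apply h1 (differentiableAt_const v)]
  simp

lemma pd_symm {u v : ℂ} {g : ℂ → E} {z : ℂ} (hg : ContDiffAt ℝ 2 g z) :
    pd u (pd v g) z = pd v (pd u g) z := by
  rw [pd_pd hg, pd_pd hg, (hg.isSymmSndFDerivAt (by norm_num)).eq]

lemma pd_re {g : ℂ → ℂ} {v z : ℂ} (hg : DifferentiableAt ℝ g z) :
    pd v (fun w => (g w).re) z = (pd v g z).re := by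
  show fderiv ℝ (⇑Complex.reCLM ∘ g) z v = _
  rw [(Complex.reCLM.hasFDerivAt.comp z hg.hasFDerivAt).fderiv]; rfl

lemma pd_im {g : ℂ → ℂ} {v z : ℂ} (hg : DifferentiableAt ℝ g z) :
    pd v (fun w => (g w).im) z = (pd v g z).im := by
  show fderiv ℝ (⇑Complex.imCLM ∘ g) z v = _
  rw [(Complex.imCLM.hasFDerivAt.comp z hg.hasFDerivAt).fderiv]; rfl

lemma pd_add {g h : ℂ → E} {v z : ℂ} (hg : DifferentiableAt ℝ g z)
    (hh : DifferentiableAt ℝ h z) :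
    pd v (fun w => g w + h w) z = pd v g z + pd v h z := by
  show fderiv ℝ _ z v = _
  rw [fderiv_fun_add hg hh]; rfl

lemma lap_add {u v : ℂ → E} {s : Set ℂ} (hs : IsOpen s) {z : ℂ} (hz : z ∈ s)
    (hu : ∀ w ∈ s, ContDiffAt ℝ 2 u w) (hv : ∀ w ∈ s, ContDiffAt ℝ 2 v w) :
    lap (fun w => u w + v w) z = lap u z + lap v z := by
  have hud : ∀ w ∈ s, DifferentiableAt ℝ u w :=
    fun w hw => (hu w hw).differentiableAt two_ne_zero
  have hvd : ∀ w ∈ s, DifferentiableAt ℝ v w :=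
    fun w hw => (hv w hw).differentiableAt two_ne_zero
  have key : ∀ e : ℂ, (pd e fun w => u w + v w) =ᶠ[nhds z]
      fun w => pd e u w + pd e v w := by
    intro e
    filter_upwards [hs.mem_nhds hz] with w hw
    exact pd_add (hud w hw) (hvd w hw)
  have h2 : ∀ e : ℂ, pd e (pd e fun w => u w + v w) z
      = pd e (pd e u) z + pd e (pd e v) z := by
    intro e
    show fderiv ℝ _ z e = _
    rw [(key e).fderiv_eq, fderiv_fun_add (pd_diffAt (hu z hz)) (pd_diffAt (hv z hz))]
    rfl
  rw [lap_eq, h2 1, h2 I, lap_eq, lap_eq]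
  abel

lemma pd_const_mul {u : ℂ → ℝ} {c : ℝ} {v z : ℂ} (hu : DifferentiableAt ℝ u z) :
    pd v (fun w => c * u w) z = c * pd v u z := by
  show fderiv ℝ _ z v = _
  rw [fderiv_const_mul hu]; rfl

lemma lap_const_mul {u : ℂ → ℝ} {c : ℝ} {s : Set ℂ} (hs : IsOpen s) {z : ℂ} (hz : z ∈ s)
    (hu : ∀ w ∈ s, ContDiffAt ℝ 2 u w) :
    lap (fun w => c * u w) z = c * lap u z := by
  have key : ∀ e : ℂ, (pd e fun w => c * u w) =ᶠ[nhds z] fun w => c * pd e u w := by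
    intro e
    filter_upwards [hs.mem_nhds hz] with w hw
    exact pd_const_mul ((hu w hw).differentiableAt two_ne_zero)
  have h2 : ∀ e : ℂ, pd e (pd e fun w => c * u w) z = c * pd e (pd e u) z := by
    intro e
    show fderiv ℝ _ z e = _
    rw [(key e).fderiv_eq, fderiv_const_mul (pd_diffAt (hu z hz))]
    rfl
  rw [lap_eq, h2 1, h2 I, lap_eq]
  ring

lemma pd_sq {u : ℂ → ℝ} {v z : ℂ} (hu : DifferentiableAt ℝ u z) :
    pd v (fun w => u w ^ 2) z = 2 * u z * pd v u z := by
  have h2 : (fun w => u w ^ 2) = fun w => u w * u w := by funext w; ring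
  rw [h2]
  show (fderiv ℝ (fun w => u w * u w) z) v = 2 * u z * fderiv ℝ u z v
  rw [(hu.hasFDerivAt.fun_mul hu.hasFDerivAt).fderiv]
  show u z * fderiv ℝ u z v + u z * fderiv ℝ u z v = _
  ring

lemma lap_sq {u : ℂ → ℝ} {s : Set ℂ} (hs : IsOpen s) {z : ℂ} (hz : z ∈ s)
    (hu : ∀ w ∈ s, ContDiffAt ℝ 2 u w) :
    lap (fun w => u w ^ 2) z
      = 2 * ((pd 1 u z) ^ 2 + (pd I u z) ^ 2) + 2 * u z * lap u z := by
  have hud : ∀ w ∈ s, DifferentiableAt ℝ u w :=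
    fun w hw => (hu w hw).differentiableAt two_ne_zero
  have key : ∀ e : ℂ, (pd e fun w => u w ^ 2) =ᶠ[nhds z]
      fun w => 2 * (u w * pd e u w) := by
    intro e
    filter_upwards [hs.mem_nhds hz] with w hw
    rw [pd_sq (hud w hw)]; ring
  have h2 : ∀ e : ℂ, pd e (pd e fun w => u w ^ 2) z
      = 2 * (pd e u z * pd e u z + u z * pd e (pd e u) z) := by
    intro e
    show fderiv ℝ _ z e = _
    rw [(key e).fderiv_eq]
    have hm := ((hud z hz).hasFDerivAt.fun_mul
      (pd_diffAt (v := e) (hu z hz)).hasFDerivAt).const_mul (2:ℝ)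
    rw [hm.fderiv]
    show (2:ℝ) • (u z • fderiv ℝ (pd e u) z + pd e u z • fderiv ℝ u z) e = _
    show (2:ℝ) * (u z * fderiv ℝ (pd e u) z e + pd e u z * fderiv ℝ u z e) = _
    show (2:ℝ) * (u z * pd e (pd e u) z + pd e u z * pd e u z) = _
    ring
  rw [lap_eq, h2 1, h2 I, lap_eq]
  ring

lemma lap_re {g : ℂ → ℂ} {s : Set ℂ} (hs : IsOpen s) {z : ℂ} (hz : z ∈ s)
    (hg : ∀ w ∈ s, ContDiffAt ℝ 2 g w) :
    lap (fun w => (g w).re) z = (lap g z).re := by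
  have key : ∀ e : ℂ, (pd e fun w => (g w).re) =ᶠ[nhds z] fun w => (pd e g w).re := by
    intro e
    filter_upwards [hs.mem_nhds hz] with w hw
    exact pd_re ((hg w hw).differentiableAt two_ne_zero)
  have h2 : ∀ e : ℂ, pd e (pd e fun w => (g w).re) z = (pd e (pd e g) z).re := by
    intro e
    show fderiv ℝ _ z e = _
    rw [(key e).fderiv_eq]
    exact pd_re (pd_diffAt (hg z hz))
  rw [lap_eq, h2 1, h2 I, lap_eq, Complex.add_re]

lemma lap_im {g : ℂ → ℂ} {s : Set ℂ} (hs : IsOpen s) {z : ℂ} (hz : z ∈ s)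
    (hg : ∀ w ∈ s, ContDiffAt ℝ 2 g w) :
    lap (fun w => (g w).im) z = (lap g z).im := by
  have key : ∀ e : ℂ, (pd e fun w => (g w).im) =ᶠ[nhds z] fun w => (pd e g w).im := by
    intro e
    filter_upwards [hs.mem_nhds hz] with w hw
    exact pd_im ((hg w hw).differentiableAt two_ne_zero)
  have h2 : ∀ e : ℂ, pd e (pd e fun w => (g w).im) z = (pd e (pd e g) z).im := by
    intro e
    show fderiv ℝ _ z e = _
    rw [(key e).fderiv_eq]
    exact pd_im (pd_diffAt (hg z hz))
  rw [lap_eq, h2 1, h2 I, lap_eq, Complex.add_im]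

end helpers

lemma pd_wd {g : ℂ → ℂ} {v z : ℂ} (h1 : DifferentiableAt ℝ (pd 1 g) z)
    (hI : DifferentiableAt ℝ (pd I g) z) :
    pd v (wd g) z = (pd v (pd 1 g) z - I * pd v (pd I g) z) / 2 := by
  have hfun : wd g = fun w => (2⁻¹:ℂ) * (pd 1 g w - I * pd I g w) := by
    funext w
    show (pd 1 g w - I * pd I g w) / 2 = _
    ring
  rw [hfun]
  have H := ((h1.hasFDerivAt.fun_sub (hI.hasFDerivAt.const_mul I)).const_mul (2⁻¹:ℂ)).fderiv
  show fderiv ℝ (fun w => (2⁻¹:ℂ) * (pd 1 g w - I * pd I g w)) z v = _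
  rw [H]
  show (2⁻¹:ℂ) * (fderiv ℝ (pd 1 g) z v - I * fderiv ℝ (pd I g) z v) = _
  show (2⁻¹:ℂ) * (pd v (pd 1 g) z - I * pd v (pd I g) z) = _
  ring

lemma pd_wdb {g : ℂ → ℂ} {v z : ℂ} (h1 : DifferentiableAt ℝ (pd 1 g) z)
    (hI : DifferentiableAt ℝ (pd I g) z) :
    pd v (wdb g) z = (pd v (pd 1 g) z + I * pd v (pd I g) z) / 2 := by
  have hfun : wdb g = fun w => (2⁻¹:ℂ) * (pd 1 g w + I * pd I g w) := by
    funext w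
    show (pd 1 g w + I * pd I g w) / 2 = _
    ring
  rw [hfun]
  have H := ((h1.hasFDerivAt.fun_add (hI.hasFDerivAt.const_mul I)).const_mul (2⁻¹:ℂ)).fderiv
  show fderiv ℝ (fun w => (2⁻¹:ℂ) * (pd 1 g w + I * pd I g w)) z v = _
  rw [H]
  show (2⁻¹:ℂ) * (fderiv ℝ (pd 1 g) z v + I * fderiv ℝ (pd I g) z v) = _
  show (2⁻¹:ℂ) * (pd v (pd 1 g) z + I * pd v (pd I g) z) = _
  ring

/-- If f ∈ C³(𝔻) and Re[(Δf)_z conj(f_z) + (Δf)_z̄ conj(f_z̄)] ≥ 0,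
then F = |f_z|² + |f_z̄|² is subharmonic: indeed
ΔF = 4(|f_zz|² + |f_z̄z̄|²) + (1/2)|Δf|² + 2 Re[(Δf)_z conj(f_z) + (Δf)_z̄ conj(f_z̄)] ≥ 0. -/
theorem grad_sq_subharmonic (f : ℂ → ℂ)
    (hf : ContDiffOn ℝ 3 f (ball (0:ℂ) 1))
    (hRe : ∀ z ∈ ball (0:ℂ) 1,
      0 ≤ (wd (lap f) z * (starRingEnd ℂ) (wd f z) +
            wdb (lap f) z * (starRingEnd ℂ) (wdb f z)).re) :
    ∀ z ∈ ball (0:ℂ) 1,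
      lap (fun w => ‖wd f w‖ ^ 2 + ‖wdb f w‖ ^ 2) z =
        4 * (‖wd (wd f) z‖ ^ 2 + ‖wdb (wdb f) z‖ ^ 2) + (1 / 2) * ‖lap f z‖ ^ 2 +
          2 * (wd (lap f) z * (starRingEnd ℂ) (wd f z) +
                wdb (lap f) z * (starRingEnd ℂ) (wdb f z)).re ∧
      0 ≤ lap (fun w => ‖wd f w‖ ^ 2 + ‖wdb f w‖ ^ 2) z := by
  intro z hz
  have hs : IsOpen (ball (0:ℂ) 1) := isOpen_ball
  set s : Set ℂ := ball (0:ℂ) 1 with hsdef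
  -- smoothness bookkeeping
  have h3 : ∀ w ∈ s, ContDiffAt ℝ 3 f w := fun w hw => hf.contDiffAt (hs.mem_nhds hw)
  have h2f : ∀ w ∈ s, ContDiffAt ℝ 2 f w := fun w hw => (h3 w hw).of_le (by norm_num)
  have h2f1 : ∀ w ∈ s, ContDiffAt ℝ 2 (pd 1 f) w := fun w hw => by
    have : ContDiffAt ℝ (2+1 : ℕ) f w := by exact_mod_cast h3 w hw
    exact pd_contDiffAt (n := 2) this
  have h2f2 : ∀ w ∈ s, ContDiffAt ℝ 2 (pd I f) w := fun w hw => by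
    have : ContDiffAt ℝ (2+1 : ℕ) f w := by exact_mod_cast h3 w hw
    exact pd_contDiffAt (n := 2) this
  have h1d : ∀ w ∈ s, DifferentiableAt ℝ (pd 1 f) w :=
    fun w hw => (h2f1 w hw).differentiableAt two_ne_zero
  have h2d : ∀ w ∈ s, DifferentiableAt ℝ (pd I f) w :=
    fun w hw => (h2f2 w hw).differentiableAt two_ne_zero
  -- components of the first derivatives
  have ha2 : ∀ w ∈ s, ContDiffAt ℝ 2 (fun x => (pd 1 f x).re) w := fun w hw =>
    Complex.reCLM.contDiff.comp_contDiffAt w (h2f1 w hw)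
  have hb2 : ∀ w ∈ s, ContDiffAt ℝ 2 (fun x => (pd 1 f x).im) w := fun w hw =>
    Complex.imCLM.contDiff.comp_contDiffAt w (h2f1 w hw)
  have hc2 : ∀ w ∈ s, ContDiffAt ℝ 2 (fun x => (pd I f x).re) w := fun w hw =>
    Complex.reCLM.contDiff.comp_contDiffAt w (h2f2 w hw)
  have hd2 : ∀ w ∈ s, ContDiffAt ℝ 2 (fun x => (pd I f x).im) w := fun w hw =>
    Complex.imCLM.contDiff.comp_contDiffAt w (h2f2 w hw)
  -- rewrite F in terms of the components
  have hnorm : ∀ x : ℂ, ‖x‖ ^ 2 = x.re ^ 2 + x.im ^ 2 := fun x => by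
    rw [Complex.sq_norm, Complex.normSq_apply]; ring
  have hFeq : (fun w => ‖wd f w‖ ^ 2 + ‖wdb f w‖ ^ 2)
      = fun w => (1/2 : ℝ) * ((((fun x => (pd 1 f x).re) w) ^ 2
          + ((fun x => (pd 1 f x).im) w) ^ 2)
        + (((fun x => (pd I f x).re) w) ^ 2 + ((fun x => (pd I f x).im) w) ^ 2)) := by
    funext w
    show ‖(pd 1 f w - I * pd I f w) / 2‖ ^ 2 + ‖(pd 1 f w + I * pd I f w) / 2‖ ^ 2 = _
    rw [hnorm, hnorm]
    simp only [Complex.div_ofNat_re, Complex.div_ofNat_im, Complex.sub_re, Complex.sub_im,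
      Complex.add_re, Complex.add_im, Complex.mul_re, Complex.mul_im, Complex.I_re,
      Complex.I_im]
    ring
  -- compute the Laplacian of F
  have hlapF : lap (fun w => ‖wd f w‖ ^ 2 + ‖wdb f w‖ ^ 2) z
      = (1/2 : ℝ) *
        ((2 * (((pd 1 (pd 1 f) z).re) ^ 2 + ((pd I (pd 1 f) z).re) ^ 2)
            + 2 * (pd 1 f z).re * (pd 1 (pd 1 (pd 1 f)) z + pd I (pd I (pd 1 f)) z).re
          + (2 * (((pd 1 (pd 1 f) z).im) ^ 2 + ((pd I (pd 1 f) z).im) ^ 2)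
            + 2 * (pd 1 f z).im * (pd 1 (pd 1 (pd 1 f)) z + pd I (pd I (pd 1 f)) z).im))
        + (2 * (((pd 1 (pd I f) z).re) ^ 2 + ((pd I (pd I f) z).re) ^ 2)
            + 2 * (pd I f z).re * (pd 1 (pd 1 (pd I f)) z + pd I (pd I (pd I f)) z).re
          + (2 * (((pd 1 (pd I f) z).im) ^ 2 + ((pd I (pd I f) z).im) ^ 2)
            + 2 * (pd I f z).im * (pd 1 (pd 1 (pd I f)) z + pd I (pd I (pd I f)) z).im))) := by
    rw [hFeq]
    rw [lap_const_mul hs hz (fun w hw => (((ha2 w hw).pow 2).add ((hb2 w hw).pow 2)).add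
      (((hc2 w hw).pow 2).add ((hd2 w hw).pow 2)))]
    rw [lap_add hs hz (fun w hw => ((ha2 w hw).pow 2).add ((hb2 w hw).pow 2))
      (fun w hw => ((hc2 w hw).pow 2).add ((hd2 w hw).pow 2))]
    rw [lap_add hs hz (fun w hw => (ha2 w hw).pow 2) (fun w hw => (hb2 w hw).pow 2)]
    rw [lap_add hs hz (fun w hw => (hc2 w hw).pow 2) (fun w hw => (hd2 w hw).pow 2)]
    rw [lap_sq hs hz ha2, lap_sq hs hz hb2, lap_sq hs hz hc2, lap_sq hs hz hd2]
    rw [lap_re hs hz h2f1, lap_im hs hz h2f1, lap_re hs hz h2f2, lap_im hs hz h2f2]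
    rw [pd_re (h1d z hz), pd_re (h1d z hz), pd_im (h1d z hz), pd_im (h1d z hz),
      pd_re (h2d z hz), pd_re (h2d z hz), pd_im (h2d z hz), pd_im (h2d z hz)]
    rw [lap_eq (pd 1 f) z, lap_eq (pd I f) z]
  -- second-derivative symmetry
  have hsymm_s : ∀ w ∈ s, pd I (pd 1 f) w = pd 1 (pd I f) w :=
    fun w hw => pd_symm (h2f w hw)
  have hev : (pd I (pd 1 f)) =ᶠ[nhds z] (pd 1 (pd I f)) := by
    filter_upwards [hs.mem_nhds hz] with w hw
    exact hsymm_s w hw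
  have hB : pd 1 (pd I f) z = pd I (pd 1 f) z := (hsymm_s z hz).symm
  have hswap1 : pd I (pd I (pd 1 f)) z = pd 1 (pd I (pd I f)) z := by
    have e1 : pd I (pd I (pd 1 f)) z = pd I (pd 1 (pd I f)) z := by
      show fderiv ℝ _ z I = fderiv ℝ _ z I
      rw [hev.fderiv_eq]
    rw [e1, pd_symm (h2f2 z hz)]
  have hswap2 : pd I (pd 1 (pd 1 f)) z = pd 1 (pd 1 (pd I f)) z := by
    have e1 : pd I (pd 1 (pd 1 f)) z = pd 1 (pd I (pd 1 f)) z := pd_symm (h2f1 z hz)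
    have e2 : pd 1 (pd I (pd 1 f)) z = pd 1 (pd 1 (pd I f)) z := by
      show fderiv ℝ _ z 1 = fderiv ℝ _ z 1
      rw [hev.fderiv_eq]
    rw [e1, e2]
  -- derivatives of lap f
  have hlapf_fun : lap f = fun w => pd 1 (pd 1 f) w + pd I (pd I f) w := rfl
  have hLe : ∀ e : ℂ, pd e (lap f) z
      = pd e (pd 1 (pd 1 f)) z + pd e (pd I (pd I f)) z := by
    intro e
    rw [hlapf_fun]
    exact pd_add (pd_diffAt (h2f1 z hz)) (pd_diffAt (h2f2 z hz))
  -- expressions for all wd/wdb quantities at z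
  have hwd0 : wd f z = (pd 1 f z - I * pd I f z) / 2 := rfl
  have hwdb0 : wdb f z = (pd 1 f z + I * pd I f z) / 2 := rfl
  have hwdwd : wd (wd f) z
      = ((pd 1 (pd 1 f) z - I * pd 1 (pd I f) z) / 2
          - I * ((pd I (pd 1 f) z - I * pd I (pd I f) z) / 2)) / 2 := by
    show (pd 1 (wd f) z - I * pd I (wd f) z) / 2 = _
    rw [pd_wd (h1d z hz) (h2d z hz), pd_wd (h1d z hz) (h2d z hz)]
  have hwdbwdb : wdb (wdb f) z
      = ((pd 1 (pd 1 f) z + I * pd 1 (pd I f) z) / 2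
          + I * ((pd I (pd 1 f) z + I * pd I (pd I f) z) / 2)) / 2 := by
    show (pd 1 (wdb f) z + I * pd I (wdb f) z) / 2 = _
    rw [pd_wdb (h1d z hz) (h2d z hz), pd_wdb (h1d z hz) (h2d z hz)]
  have hlapfz : lap f z = pd 1 (pd 1 f) z + pd I (pd I f) z := rfl
  have hwdlap : wd (lap f) z
      = ((pd 1 (pd 1 (pd 1 f)) z + pd 1 (pd I (pd I f)) z)
          - I * (pd I (pd 1 (pd 1 f)) z + pd I (pd I (pd I f)) z)) / 2 := by
    show (pd 1 (lap f) z - I * pd I (lap f) z) / 2 = _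
    rw [hLe 1, hLe I]
  have hwdblap : wdb (lap f) z
      = ((pd 1 (pd 1 (pd 1 f)) z + pd 1 (pd I (pd I f)) z)
          + I * (pd I (pd 1 (pd 1 f)) z + pd I (pd I (pd I f)) z)) / 2 := by
    show (pd 1 (lap f) z + I * pd I (lap f) z) / 2 = _
    rw [hLe 1, hLe I]
  -- the identity
  have hkey : lap (fun w => ‖wd f w‖ ^ 2 + ‖wdb f w‖ ^ 2) z =
      4 * (‖wd (wd f) z‖ ^ 2 + ‖wdb (wdb f) z‖ ^ 2) + (1 / 2) * ‖lap f z‖ ^ 2 +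
        2 * (wd (lap f) z * (starRingEnd ℂ) (wd f z) +
              wdb (lap f) z * (starRingEnd ℂ) (wdb f z)).re := by
    rw [hlapF, hwdwd, hwdbwdb, hlapfz, hwdlap, hwdblap, hwd0, hwdb0, hB, hswap1, hswap2]
    generalize pd 1 f z = p at *
    generalize pd I f z = q at *
    generalize pd 1 (pd 1 f) z = A at *
    generalize pd I (pd 1 f) z = B at *
    generalize pd I (pd I f) z = C at *
    generalize pd 1 (pd 1 (pd 1 f)) z = S11 at *
    generalize pd 1 (pd I (pd I f)) z = S22 at *
    generalize pd I (pd 1 (pd 1 f)) z = T11 at *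
    generalize pd I (pd I (pd I f)) z = T22 at *
    rw [hnorm, hnorm, hnorm]
    simp only [map_add, map_sub, map_mul, map_div₀, Complex.conj_I, Complex.conj_ofNat,
      Complex.div_ofNat_re, Complex.div_ofNat_im, Complex.add_re, Complex.add_im,
      Complex.sub_re, Complex.sub_im, Complex.mul_re, Complex.mul_im, Complex.I_re,
      Complex.I_im, Complex.neg_re, Complex.neg_im, Complex.conj_re, Complex.conj_im]
    ring
  refine ⟨hkey, ?_⟩
  rw [hkey]
  have h := hRe z hz
  have h4 : (0:ℝ) ≤ 4 * (‖wd (wd f) z‖ ^ 2 + ‖wdb (wdb f) z‖ ^ 2)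
      + (1 / 2) * ‖lap f z‖ ^ 2 := by positivity
  linarith
end

section
/- Let f ∈ C³(𝔻) satisfy Re[(Δf)_z · conj(f_z) + (Δf)_{z̄} · conj(f_{z̄})] ≥ 0 and suppose f belongs to the Dirichlet-type space 𝒟_{γ,2}(𝔻), i.e., ∫_𝔻 (1-|z|)^γ ‖D_f(z)‖² dσ(z) < ∞, where γ > 0. Then there is a constant C > 0 such that ‖D_f(z)‖ ≤ C / (1-|z|)^{1+γ/2} for all z ∈ 𝔻; that is, f belongs to the generalized (1+γ/2)-Bloch space. -/
open Complex Metric MeasureTheory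

/-- ‖D_f(z)‖ = |f_z(z)| + |f_z̄(z)|. -/
noncomputable def Dnorm (f : ℂ → ℂ) (z : ℂ) : ℝ := ‖wd f z‖ + ‖wdb f z‖

section LapToolkit

variable {E : Type*} [NormedAddCommGroup E] [NormedSpace ℝ E]
variable {U : Set ℂ} {g h : ℂ → E} {z : ℂ}

lemma diff_of_C1 (hU : IsOpen U) (hg : ContDiffOn ℝ 1 g U) (hz : z ∈ U) :
    DifferentiableAt ℝ g z :=
  (hg.contDiffAt (hU.mem_nhds hz)).differentiableAt one_ne_zero

lemma diff_fderiv (hU : IsOpen U) (hg : ContDiffOn ℝ 2 g U) (hz : z ∈ U) :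
    DifferentiableAt ℝ (fderiv ℝ g) z :=
  diff_of_C1 hU (hg.fderiv_of_isOpen hU (by norm_num)) hz

lemma hasFDerivAt_fderiv_apply (hd : DifferentiableAt ℝ (fderiv ℝ g) z) (v : ℂ) :
    HasFDerivAt (fun w => fderiv ℝ g w v)
      ((ContinuousLinearMap.apply ℝ E v).comp (fderiv ℝ (fderiv ℝ g) z)) z :=
  (ContinuousLinearMap.apply ℝ E v).hasFDerivAt.comp z hd.hasFDerivAt

lemma diff_Dv (hU : IsOpen U) (hg : ContDiffOn ℝ 2 g U) (hz : z ∈ U) (v : ℂ) :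
    DifferentiableAt ℝ (fun w => fderiv ℝ g w v) z :=
  (hasFDerivAt_fderiv_apply (diff_fderiv hU hg hz) v).differentiableAt

lemma fderiv_fderiv_apply (hd : DifferentiableAt ℝ (fderiv ℝ g) z) (v u : ℂ) :
    fderiv ℝ (fun w => fderiv ℝ g w v) z u = fderiv ℝ (fderiv ℝ g) z u v := by
  rw [(hasFDerivAt_fderiv_apply hd v).fderiv]; rfl

lemma Dv_swap (hU : IsOpen U) (hg : ContDiffOn ℝ 2 g U) (hz : z ∈ U) (v u : ℂ) :
    fderiv ℝ (fun w => fderiv ℝ g w v) z u = fderiv ℝ (fun w => fderiv ℝ g w u) z v := by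
  rw [fderiv_fderiv_apply (diff_fderiv hU hg hz), fderiv_fderiv_apply (diff_fderiv hU hg hz)]
  exact ((hg.contDiffAt (hU.mem_nhds hz)).isSymmSndFDerivAt (by simp)) u v

lemma eventuallyEq_of_eqOn (hU : IsOpen U) (hz : z ∈ U) (hgh : ∀ w ∈ U, g w = h w) :
    g =ᶠ[nhds z] h :=
  Filter.eventually_iff_exists_mem.2 ⟨U, hU.mem_nhds hz, hgh⟩

lemma lap_congr (hU : IsOpen U) (hz : z ∈ U) (hgh : ∀ w ∈ U, g w = h w) :
    lap g z = lap h z := by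
  have h1 : ∀ v : ℂ, (fun w => fderiv ℝ g w v) =ᶠ[nhds z] (fun w => fderiv ℝ h w v) := by
    intro v
    refine Filter.eventually_iff_exists_mem.2 ⟨U, hU.mem_nhds hz, fun w hw => ?_⟩
    show fderiv ℝ g w v = fderiv ℝ h w v
    rw [Filter.EventuallyEq.fderiv_eq (eventuallyEq_of_eqOn hU hw hgh)]
  unfold lap
  rw [(h1 1).fderiv_eq, (h1 Complex.I).fderiv_eq]


lemma lap_eq_s8 (hd : DifferentiableAt ℝ (fderiv ℝ g) z) :
    lap g z = fderiv ℝ (fderiv ℝ g) z 1 1 +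
      fderiv ℝ (fderiv ℝ g) z Complex.I Complex.I := by
  unfold lap
  rw [fderiv_fderiv_apply hd, fderiv_fderiv_apply hd]

lemma contDiffOn_Dv {n : WithTop ℕ∞} (hU : IsOpen U) (hg : ContDiffOn ℝ (n+1) g U) (v : ℂ) :
    ContDiffOn ℝ n (fun w => fderiv ℝ g w v) U :=
  (hg.fderiv_of_isOpen hU le_rfl).clm_apply contDiffOn_const

lemma lap_add_s8 (hU : IsOpen U) (ha : ContDiffOn ℝ 2 g U) (hb : ContDiffOn ℝ 2 h U)
    (hz : z ∈ U) : lap (fun w => g w + h w) z = lap g z + lap h z := by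
  have key : ∀ v : ℂ, (fun w => fderiv ℝ (fun y => g y + h y) w v)
      =ᶠ[nhds z] (fun w => fderiv ℝ g w v + fderiv ℝ h w v) := by
    intro v
    refine Filter.eventually_iff_exists_mem.2 ⟨U, hU.mem_nhds hz, fun w hw => ?_⟩
    show fderiv ℝ (fun y => g y + h y) w v = _
    rw [fderiv_fun_add (diff_of_C1 hU (ha.of_le (by norm_num)) hw)
      (diff_of_C1 hU (hb.of_le (by norm_num)) hw)]
    rfl
  unfold lap
  rw [(key 1).fderiv_eq, (key Complex.I).fderiv_eq,
    fderiv_fun_add (diff_Dv hU ha hz 1) (diff_Dv hU hb hz 1),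
    fderiv_fun_add (diff_Dv hU ha hz Complex.I) (diff_Dv hU hb hz Complex.I)]
  show (fderiv ℝ (fun w => fderiv ℝ g w 1) z + fderiv ℝ (fun w => fderiv ℝ h w 1) z) 1 +
    (fderiv ℝ (fun w => fderiv ℝ g w Complex.I) z +
      fderiv ℝ (fun w => fderiv ℝ h w Complex.I) z) Complex.I = _
  simp only [ContinuousLinearMap.add_apply]
  abel

lemma lap_comb {a b : ℂ → ℂ} (hU : IsOpen U) (ha : ContDiffOn ℝ 2 a U)
    (hb : ContDiffOn ℝ 2 b U) (hz : z ∈ U) (c d : ℂ) :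
    lap (fun w => c * a w + d * b w) z = c * lap a z + d * lap b z := by
  have key : ∀ v : ℂ, (fun w => fderiv ℝ (fun y => c * a y + d * b y) w v)
      =ᶠ[nhds z] (fun w => c * fderiv ℝ a w v + d * fderiv ℝ b w v) := by
    intro v
    refine Filter.eventually_iff_exists_mem.2 ⟨U, hU.mem_nhds hz, fun w hw => ?_⟩
    show fderiv ℝ (fun y => c * a y + d * b y) w v = _
    rw [fderiv_fun_add ((diff_of_C1 hU (ha.of_le (by norm_num)) hw).const_mul c)
      ((diff_of_C1 hU (hb.of_le (by norm_num)) hw).const_mul d),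
      fderiv_const_mul (diff_of_C1 hU (ha.of_le (by norm_num)) hw) c,
      fderiv_const_mul (diff_of_C1 hU (hb.of_le (by norm_num)) hw) d]
    simp [smul_eq_mul]
  have step : ∀ v u : ℂ,
      fderiv ℝ (fun w => fderiv ℝ (fun y => c * a y + d * b y) w v) z u =
      c * fderiv ℝ (fun w => fderiv ℝ a w v) z u +
        d * fderiv ℝ (fun w => fderiv ℝ b w v) z u := by
    intro v u
    rw [(key v).fderiv_eq,
      fderiv_fun_add ((diff_Dv hU ha hz v).const_mul c) ((diff_Dv hU hb hz v).const_mul d),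
      fderiv_const_mul (diff_Dv hU ha hz v) c, fderiv_const_mul (diff_Dv hU hb hz v) d]
    simp [smul_eq_mul]
  unfold lap
  rw [step 1 1, step Complex.I Complex.I]
  ring

lemma Dv_lap_comm {f : ℂ → ℂ} (hU : IsOpen U) (hf : ContDiffOn ℝ 3 f U) (hz : z ∈ U) (v : ℂ) :
    lap (fun w => fderiv ℝ f w v) z = fderiv ℝ (lap f) z v := by
  have hf2 : ContDiffOn ℝ 2 f U := hf.of_le (by norm_num)
  have hDa : ∀ a : ℂ, ContDiffOn ℝ 2 (fun w => fderiv ℝ f w a) U := fun a =>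
    contDiffOn_Dv hU (by exact_mod_cast hf) a
  -- the two pieces of lap f
  have hlapf : lap f = fun w => (fderiv ℝ (fun y => fderiv ℝ f y 1) w 1) +
      (fderiv ℝ (fun y => fderiv ℝ f y Complex.I) w Complex.I) := rfl
  have main : ∀ a : ℂ,
      fderiv ℝ (fun w => fderiv ℝ (fun y => fderiv ℝ f y a) w a) z v =
      fderiv ℝ (fun w => fderiv ℝ (fun y => fderiv ℝ f y v) w a) z a := by
    intro a
    rw [Dv_swap hU (hDa a) hz a v]
    have ev : (fun w => fderiv ℝ (fun y => fderiv ℝ f y a) w v)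
        =ᶠ[nhds z] (fun w => fderiv ℝ (fun y => fderiv ℝ f y v) w a) := by
      refine Filter.eventually_iff_exists_mem.2 ⟨U, hU.mem_nhds hz, fun w hw => ?_⟩
      exact Dv_swap hU hf2 hw a v
    rw [ev.fderiv_eq]
  rw [hlapf]
  rw [fderiv_fun_add (diff_Dv hU (hDa 1) hz 1) (diff_Dv hU (hDa Complex.I) hz Complex.I)]
  show lap (fun w => fderiv ℝ f w v) z = _
  unfold lap
  simp only [ContinuousLinearMap.add_apply]
  rw [← main 1, ← main Complex.I]

lemma wd_lap_comm {f : ℂ → ℂ} (hU : IsOpen U) (hf : ContDiffOn ℝ 3 f U) (hz : z ∈ U) :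
    lap (wd f) z = wd (lap f) z := by
  have hDa : ∀ a : ℂ, ContDiffOn ℝ 2 (fun w => fderiv ℝ f w a) U := fun a =>
    contDiffOn_Dv hU (by exact_mod_cast hf) a
  have hwd : ∀ w, wd f w = (2⁻¹ : ℂ) * fderiv ℝ f w 1 +
      (-(Complex.I/2)) * fderiv ℝ f w Complex.I := by
    intro w; unfold wd; ring
  rw [lap_congr hU hz (fun w _ => hwd w), lap_comb hU (hDa 1) (hDa Complex.I) hz _ _,
    Dv_lap_comm hU hf hz 1, Dv_lap_comm hU hf hz Complex.I]
  unfold wd; ring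

lemma wdb_lap_comm {f : ℂ → ℂ} (hU : IsOpen U) (hf : ContDiffOn ℝ 3 f U) (hz : z ∈ U) :
    lap (wdb f) z = wdb (lap f) z := by
  have hDa : ∀ a : ℂ, ContDiffOn ℝ 2 (fun w => fderiv ℝ f w a) U := fun a =>
    contDiffOn_Dv hU (by exact_mod_cast hf) a
  have hwd : ∀ w, wdb f w = (2⁻¹ : ℂ) * fderiv ℝ f w 1 +
      (Complex.I/2) * fderiv ℝ f w Complex.I := by
    intro w; unfold wdb; ring
  rw [lap_congr hU hz (fun w _ => hwd w), lap_comb hU (hDa 1) (hDa Complex.I) hz _ _,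
    Dv_lap_comm hU hf hz 1, Dv_lap_comm hU hf hz Complex.I]
  unfold wdb; ring


lemma lap_sq_s8 {q : ℂ → ℝ} (hU : IsOpen U) (hq : ContDiffOn ℝ 2 q U) (hz : z ∈ U) :
    lap (fun w => q w * q w) z =
      2 * (fderiv ℝ q z 1 * fderiv ℝ q z 1 + fderiv ℝ q z Complex.I * fderiv ℝ q z Complex.I)
        + 2 * q z * lap q z := by
  have hq1 : ∀ w ∈ U, DifferentiableAt ℝ q w := fun w hw =>
    diff_of_C1 hU (hq.of_le (by norm_num)) hw
  have key : ∀ v : ℂ, (fun w => fderiv ℝ (fun y => q y * q y) w v)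
      =ᶠ[nhds z] (fun w => (2 * q w) * fderiv ℝ q w v) := by
    intro v
    refine Filter.eventually_iff_exists_mem.2 ⟨U, hU.mem_nhds hz, fun w hw => ?_⟩
    show fderiv ℝ (fun y => q y * q y) w v = _
    rw [fderiv_fun_mul (hq1 w hw) (hq1 w hw)]
    simp [smul_eq_mul]; ring
  have step : ∀ v : ℂ,
      fderiv ℝ (fun w => fderiv ℝ (fun y => q y * q y) w v) z v =
      2 * q z * fderiv ℝ (fun w => fderiv ℝ q w v) z v
        + 2 * (fderiv ℝ q z v * fderiv ℝ q z v) := by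
    intro v
    rw [(key v).fderiv_eq, fderiv_fun_mul ((hq1 z hz).const_mul 2) (diff_Dv hU hq hz v)]
    have : fderiv ℝ (fun w => 2 * q w) z = (2:ℝ) • fderiv ℝ q z :=
      fderiv_const_mul (hq1 z hz) 2
    simp only [ContinuousLinearMap.add_apply, ContinuousLinearMap.smul_apply, this,
      smul_eq_mul]
    ring
  show fderiv ℝ (fun w => fderiv ℝ (fun y => q y * q y) w 1) z 1 + _ = _
  rw [step 1, step Complex.I]
  show _ = _ + 2 * q z * (fderiv ℝ (fun w => fderiv ℝ q w 1) z 1 +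
    fderiv ℝ (fun w => fderiv ℝ q w Complex.I) z Complex.I)
  ring

lemma contDiffOn_re {h : ℂ → ℂ} {n : WithTop ℕ∞} (hh : ContDiffOn ℝ n h U) :
    ContDiffOn ℝ n (fun w => (h w).re) U :=
  Complex.reCLM.contDiff.comp_contDiffOn hh

lemma contDiffOn_im {h : ℂ → ℂ} {n : WithTop ℕ∞} (hh : ContDiffOn ℝ n h U) :
    ContDiffOn ℝ n (fun w => (h w).im) U :=
  Complex.imCLM.contDiff.comp_contDiffOn hh

lemma fderiv_re_comp {h : ℂ → ℂ} {w : ℂ} (hd : DifferentiableAt ℝ h w) (v : ℂ) :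
    fderiv ℝ (fun y => (h y).re) w v = (fderiv ℝ h w v).re := by
  have : HasFDerivAt (fun y => (h y).re) (Complex.reCLM.comp (fderiv ℝ h w)) w :=
    Complex.reCLM.hasFDerivAt.comp w hd.hasFDerivAt
  rw [this.fderiv]; rfl

lemma fderiv_im_comp {h : ℂ → ℂ} {w : ℂ} (hd : DifferentiableAt ℝ h w) (v : ℂ) :
    fderiv ℝ (fun y => (h y).im) w v = (fderiv ℝ h w v).im := by
  have : HasFDerivAt (fun y => (h y).im) (Complex.imCLM.comp (fderiv ℝ h w)) w :=
    Complex.imCLM.hasFDerivAt.comp w hd.hasFDerivAt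
  rw [this.fderiv]; rfl

lemma lap_re_comp {h : ℂ → ℂ} (hU : IsOpen U) (hh : ContDiffOn ℝ 2 h U) (hz : z ∈ U) :
    lap (fun w => (h w).re) z = (lap h z).re := by
  have key : ∀ v : ℂ, (fun w => fderiv ℝ (fun y => (h y).re) w v)
      =ᶠ[nhds z] (fun w => (fderiv ℝ h w v).re) := by
    intro v
    refine Filter.eventually_iff_exists_mem.2 ⟨U, hU.mem_nhds hz, fun w hw => ?_⟩
    exact fderiv_re_comp (diff_of_C1 hU (hh.of_le (by norm_num)) hw) v
  show fderiv ℝ (fun w => fderiv ℝ (fun y => (h y).re) w 1) z 1 + _ = _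
  rw [(key 1).fderiv_eq, (key Complex.I).fderiv_eq,
    fderiv_re_comp (diff_Dv hU hh hz 1) 1, fderiv_re_comp (diff_Dv hU hh hz Complex.I) Complex.I]
  rfl

lemma lap_im_comp {h : ℂ → ℂ} (hU : IsOpen U) (hh : ContDiffOn ℝ 2 h U) (hz : z ∈ U) :
    lap (fun w => (h w).im) z = (lap h z).im := by
  have key : ∀ v : ℂ, (fun w => fderiv ℝ (fun y => (h y).im) w v)
      =ᶠ[nhds z] (fun w => (fderiv ℝ h w v).im) := by
    intro v
    refine Filter.eventually_iff_exists_mem.2 ⟨U, hU.mem_nhds hz, fun w hw => ?_⟩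
    exact fderiv_im_comp (diff_of_C1 hU (hh.of_le (by norm_num)) hw) v
  show fderiv ℝ (fun w => fderiv ℝ (fun y => (h y).im) w 1) z 1 + _ = _
  rw [(key 1).fderiv_eq, (key Complex.I).fderiv_eq,
    fderiv_im_comp (diff_Dv hU hh hz 1) 1, fderiv_im_comp (diff_Dv hU hh hz Complex.I) Complex.I]
  rfl

lemma le_lap_normSq {h : ℂ → ℂ} (hU : IsOpen U) (hh : ContDiffOn ℝ 2 h U) (hz : z ∈ U) :
    2 * (lap h z * (starRingEnd ℂ) (h z)).re ≤
      lap (fun w => (h w).re * (h w).re + (h w).im * (h w).im) z := by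
  have hre := contDiffOn_re (U := U) (n := 2) hh
  have him := contDiffOn_im (U := U) (n := 2) hh
  rw [lap_add_s8 hU (hre.mul hre) (him.mul him) hz, lap_sq_s8 hU hre hz, lap_sq_s8 hU him hz,
    lap_re_comp hU hh hz, lap_im_comp hU hh hz]
  have h1 : ∀ v : ℂ, fderiv ℝ (fun y => (h y).re) z v = (fderiv ℝ h z v).re := fun v =>
    fderiv_re_comp (diff_of_C1 hU (hh.of_le (by norm_num)) hz) v
  have h2 : ∀ v : ℂ, fderiv ℝ (fun y => (h y).im) z v = (fderiv ℝ h z v).im := fun v =>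
    fderiv_im_comp (diff_of_C1 hU (hh.of_le (by norm_num)) hz) v
  rw [h1, h1, h2, h2]
  have : (lap h z * (starRingEnd ℂ) (h z)).re =
      (lap h z).re * (h z).re + (lap h z).im * (h z).im := by
    simp [Complex.mul_re]
  rw [this]
  nlinarith [sq_nonneg ((fderiv ℝ h z 1).re), sq_nonneg ((fderiv ℝ h z 1).im),
    sq_nonneg ((fderiv ℝ h z Complex.I).re), sq_nonneg ((fderiv ℝ h z Complex.I).im)]

lemma contDiffOn_wd {f : ℂ → ℂ} (hU : IsOpen U) (hf : ContDiffOn ℝ 3 f U) :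
    ContDiffOn ℝ 2 (wd f) U := by
  have h1 : ContDiffOn ℝ 2 (fun w => fderiv ℝ f w 1) U := contDiffOn_Dv hU (by exact_mod_cast hf) 1
  have hI : ContDiffOn ℝ 2 (fun w => fderiv ℝ f w Complex.I) U :=
    contDiffOn_Dv hU (by exact_mod_cast hf) Complex.I
  exact (h1.sub (contDiffOn_const.mul hI)).div_const 2

lemma contDiffOn_wdb {f : ℂ → ℂ} (hU : IsOpen U) (hf : ContDiffOn ℝ 3 f U) :
    ContDiffOn ℝ 2 (wdb f) U := by
  have h1 : ContDiffOn ℝ 2 (fun w => fderiv ℝ f w 1) U := contDiffOn_Dv hU (by exact_mod_cast hf) 1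
  have hI : ContDiffOn ℝ 2 (fun w => fderiv ℝ f w Complex.I) U :=
    contDiffOn_Dv hU (by exact_mod_cast hf) Complex.I
  exact (h1.add (contDiffOn_const.mul hI)).div_const 2

lemma lapF_nonneg {f : ℂ → ℂ} (hU : IsOpen U) (hf : ContDiffOn ℝ 3 f U) (hz : z ∈ U)
    (h0 : 0 ≤ (wd (lap f) z * (starRingEnd ℂ) (wd f z) +
      wdb (lap f) z * (starRingEnd ℂ) (wdb f z)).re) :
    0 ≤ lap (fun w => (wd f w).re * (wd f w).re + (wd f w).im * (wd f w).im +
      ((wdb f w).re * (wdb f w).re + (wdb f w).im * (wdb f w).im)) z := by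
  have hwd := contDiffOn_wd hU hf
  have hwdb := contDiffOn_wdb hU hf
  have hA : ContDiffOn ℝ 2 (fun w => (wd f w).re * (wd f w).re + (wd f w).im * (wd f w).im) U :=
    ((contDiffOn_re hwd).mul (contDiffOn_re hwd)).add ((contDiffOn_im hwd).mul (contDiffOn_im hwd))
  have hB : ContDiffOn ℝ 2 (fun w => (wdb f w).re * (wdb f w).re + (wdb f w).im * (wdb f w).im) U :=
    ((contDiffOn_re hwdb).mul (contDiffOn_re hwdb)).add
      ((contDiffOn_im hwdb).mul (contDiffOn_im hwdb))
  rw [lap_add_s8 hU hA hB hz]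
  have lA := le_lap_normSq hU hwd hz
  have lB := le_lap_normSq hU hwdb hz
  rw [wd_lap_comm hU hf hz] at lA
  rw [wdb_lap_comm hU hf hz] at lB
  rw [Complex.add_re] at h0
  linarith


end LapToolkit

noncomputable def cE (θ : ℝ) : ℂ := Complex.exp (θ * Complex.I)

lemma cE_norm (θ : ℝ) : ‖cE θ‖ = 1 := by
  simp [cE, Complex.norm_exp_ofReal_mul_I]

lemma cE_hasDerivAt (θ : ℝ) : HasDerivAt cE (Complex.I * cE θ) θ := by
  have h1 : HasDerivAt (fun t : ℝ => (t : ℂ) * Complex.I) ((1:ℂ) * Complex.I) θ :=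
    (Complex.ofRealCLM.hasDerivAt).mul_const Complex.I
  have h2 := h1.cexp
  rw [show Complex.I * cE θ = Complex.exp ((θ:ℂ) * Complex.I) * ((1:ℂ) * Complex.I) by
    rw [cE]; ring]
  exact h2

lemma cE_continuous : Continuous cE :=
  Complex.continuous_exp.comp (Complex.continuous_ofReal.mul continuous_const)

lemma cE_eq (θ : ℝ) : cE θ = (Real.cos θ : ℂ) + (Real.sin θ : ℂ) * Complex.I := by
  rw [cE, Complex.exp_mul_I]
  push_cast
  rfl

lemma cE_pi_eq : cE Real.pi = cE (-Real.pi) := by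
  rw [cE_eq, cE_eq]; simp

lemma I_mul_cE (θ : ℝ) : Complex.I * cE θ = (-Real.sin θ : ℂ) + (Real.cos θ : ℂ) * Complex.I := by
  rw [cE_eq]; push_cast; ring_nf; rw [Complex.I_sq]; ring

lemma circle_lap_aux {E : Type*} [NormedAddCommGroup E] [NormedSpace ℝ E]
    (T : ℂ →L[ℝ] ℂ →L[ℝ] E) (θ : ℝ) :
    T (cE θ) (cE θ) + T (Complex.I * cE θ) (Complex.I * cE θ) = T 1 1 + T Complex.I Complex.I := by
  have h1 : cE θ = Real.cos θ • (1:ℂ) + Real.sin θ • Complex.I := by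
    rw [cE_eq]; simp [Complex.real_smul]
  have h2 : Complex.I * cE θ = (-Real.sin θ) • (1:ℂ) + Real.cos θ • Complex.I := by
    rw [I_mul_cE]; simp [Complex.real_smul]
  rw [h2, h1]
  set a := Real.sin θ with ha; set b := Real.cos θ with hb
  simp only [_root_.map_add, _root_.map_smul, ContinuousLinearMap.add_apply, ContinuousLinearMap.smul_apply,
    ContinuousLinearMap.map_smul, smul_add, smul_smul]
  rw [show b * b = 1 - a * a by have := Real.sin_sq_add_cos_sq θ; nlinarith]
  module


lemma submean {g : ℂ → ℝ} {U : Set ℂ} (hU : IsOpen U) (hg : ContDiffOn ℝ 2 g U)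
    (hlap : ∀ w ∈ U, 0 ≤ lap g w) {z : ℂ} {R R' : ℝ} (hR : 0 < R) (hRR' : R < R')
    (hB : closedBall z R' ⊆ U) :
    g z * (Real.pi * R ^ 2) ≤ ∫ w in ball z R, g w := by
  have pi_pos := Real.pi_pos
  have hR' : 0 < R' := hR.trans hRR'
  set c : ℝ → ℝ → ℂ := fun r θ => z + r • cE θ with hcdef
  have hcK : ∀ {r : ℝ}, |r| ≤ R' → ∀ θ, c r θ ∈ closedBall z R' := by
    intro r hr θ
    simp only [hcdef, mem_closedBall, dist_eq_norm, add_sub_cancel_left, norm_smul, cE_norm,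
      mul_one, Real.norm_eq_abs]
    exact hr
  have hcU : ∀ {r : ℝ}, |r| ≤ R' → ∀ θ, c r θ ∈ U := fun hr θ => hB (hcK hr θ)
  -- continuity of c
  have hc_cont : ∀ r, Continuous (c r) := fun r =>
    continuous_const.add (cE_continuous.const_smul r)
  have hc_cont2 : Continuous (fun p : ℝ × ℝ => c p.1 p.2) :=
    continuous_const.add (continuous_fst.smul (cE_continuous.comp continuous_snd))
  -- derivative of c in r and θ
  have hc_dr : ∀ r θ, HasDerivAt (fun t => c t θ) (cE θ) r := by
    intro r θ
    simpa [hcdef] using ((hasDerivAt_id r).smul_const (cE θ)).const_add z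
  have hc_dθ : ∀ r θ, HasDerivAt (c r) (r • (Complex.I * cE θ)) θ := by
    intro r θ
    exact ((cE_hasDerivAt θ).const_smul r).const_add z
  -- continuity/differentiability data for g
  have gc : ContinuousOn g U := hg.continuousOn
  have hgC1 : ContDiffOn ℝ 1 (fderiv ℝ g) U := hg.fderiv_of_isOpen hU (by norm_num)
  have g1c : ContinuousOn (fderiv ℝ g) U := hgC1.continuousOn
  have g2c : ContinuousOn (fderiv ℝ (fderiv ℝ g)) U :=
    (hgC1.fderiv_of_isOpen (m := 0) hU (by norm_num)).continuousOn
  have hdiff : ∀ w ∈ U, HasFDerivAt g (fderiv ℝ g w) w := fun w hw =>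
    (diff_of_C1 hU (hg.of_le (by norm_num)) hw).hasFDerivAt
  have hdiff1 : ∀ w ∈ U, HasFDerivAt (fderiv ℝ g) (fderiv ℝ (fderiv ℝ g) w) w := fun w hw =>
    (diff_fderiv hU hg hw).hasFDerivAt
  -- bounds on compact closedBall
  obtain ⟨M1, hM1⟩ := (isCompact_closedBall z R').exists_bound_of_continuousOn (g1c.mono hB)
  obtain ⟨M2, hM2⟩ := (isCompact_closedBall z R').exists_bound_of_continuousOn (E := ℂ →L[ℝ] ℂ →L[ℝ] ℝ) (g2c.mono hB)
  -- the circle averages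
  set m : ℝ → ℝ := fun r => ∫ θ in (-Real.pi)..Real.pi, g (c r θ) with hmdef
  set m1 : ℝ → ℝ := fun r => ∫ θ in (-Real.pi)..Real.pi, fderiv ℝ g (c r θ) (cE θ) with hm1def
  set q : ℝ → ℝ := fun r =>
    ∫ θ in (-Real.pi)..Real.pi, fderiv ℝ (fderiv ℝ g) (c r θ) (cE θ) (cE θ) with hqdef
  set s : Set ℝ := Set.Ioo (-R') R' with hsdef
  have habs : ∀ {r : ℝ}, r ∈ s → |r| < R' := fun hr => abs_lt.2 ⟨hr.1, hr.2⟩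
  have hball : ∀ {r x : ℝ}, r ∈ s → x ∈ ball r (R' - |r|) → |x| < R' := by
    intro r x hr hx
    have : |x - r| < R' - |r| := by simpa [dist_eq_norm, Real.norm_eq_abs] using hx
    calc |x| ≤ |x - r| + |r| := by simpa using abs_add_le (x - r) r
    _ < R' := by linarith
  -- continuity of the integrands in θ (for fixed |r| ≤ R')
  have cont0 : ∀ {r : ℝ}, |r| ≤ R' → Continuous (fun θ => g (c r θ)) := fun hr =>
    gc.comp_continuous (hc_cont _) (hcU hr)
  have cont1 : ∀ {r : ℝ}, |r| ≤ R' → Continuous (fun θ => fderiv ℝ g (c r θ)) := fun hr =>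
    g1c.comp_continuous (hc_cont _) (hcU hr)
  have cont2 : ∀ {r : ℝ}, |r| ≤ R' →
      Continuous (fun θ => fderiv ℝ (fderiv ℝ g) (c r θ)) := fun hr =>
    g2c.comp_continuous (hc_cont _) (hcU hr)
  -- derivative of m
  have hm' : ∀ r ∈ s, HasDerivAt m (m1 r) r := by
    intro r hr
    have hε : 0 < R' - |r| := by have := habs hr; linarith
    have key := intervalIntegral.hasDerivAt_integral_of_dominated_loc_of_deriv_le
      (F := fun x θ => g (c x θ)) (F' := fun x θ => fderiv ℝ g (c x θ) (cE θ))
      (bound := fun _ => M1) (μ := volume) (a := -Real.pi) (b := Real.pi) (x₀ := r) (Metric.ball_mem_nhds r hε)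
      ?_ ?_ ?_ ?_ ?_ ?_
    · exact key.2
    · filter_upwards [Metric.ball_mem_nhds r hε] with x hx
      exact (cont0 (hball hr hx).le).aestronglyMeasurable
    · exact (cont0 (habs hr).le).intervalIntegrable _ _
    · exact ((cont1 (habs hr).le).clm_apply cE_continuous).aestronglyMeasurable
    · refine Filter.Eventually.of_forall fun θ _ x hx => ?_
      calc ‖fderiv ℝ g (c x θ) (cE θ)‖ ≤ ‖fderiv ℝ g (c x θ)‖ * ‖cE θ‖ :=
            ContinuousLinearMap.le_opNorm _ _
      _ ≤ M1 := by rw [cE_norm, mul_one]; exact hM1 _ (hcK (hball hr hx).le θ)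
    · exact intervalIntegrable_const
    · refine Filter.Eventually.of_forall fun θ _ x hx => ?_
      have := (hdiff _ (hcU (hball hr hx).le θ)).comp_hasDerivAt x (hc_dr x θ)
      simpa [Function.comp_def] using this
  -- derivative of m1
  have hm1' : ∀ r ∈ s, HasDerivAt m1 (q r) r := by
    intro r hr
    have hε : 0 < R' - |r| := by have := habs hr; linarith
    have key := intervalIntegral.hasDerivAt_integral_of_dominated_loc_of_deriv_le
      (F := fun x θ => fderiv ℝ g (c x θ) (cE θ))
      (F' := fun x θ => fderiv ℝ (fderiv ℝ g) (c x θ) (cE θ) (cE θ))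
      (bound := fun _ => M2) (μ := volume) (a := -Real.pi) (b := Real.pi) (x₀ := r) (Metric.ball_mem_nhds r hε)
      ?_ ?_ ?_ ?_ ?_ ?_
    · exact key.2
    · filter_upwards [Metric.ball_mem_nhds r hε] with x hx
      exact ((cont1 (hball hr hx).le).clm_apply cE_continuous).aestronglyMeasurable
    · exact ((cont1 (habs hr).le).clm_apply cE_continuous).intervalIntegrable _ _
    · exact (((cont2 (habs hr).le).clm_apply cE_continuous).clm_apply
        cE_continuous).aestronglyMeasurable
    · refine Filter.Eventually.of_forall fun θ _ x hx => ?_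
      calc ‖fderiv ℝ (fderiv ℝ g) (c x θ) (cE θ) (cE θ)‖
          ≤ ‖fderiv ℝ (fderiv ℝ g) (c x θ) (cE θ)‖ * ‖cE θ‖ :=
            ContinuousLinearMap.le_opNorm _ _
      _ ≤ ‖fderiv ℝ (fderiv ℝ g) (c x θ)‖ * ‖cE θ‖ * ‖cE θ‖ := by
            have := ContinuousLinearMap.le_opNorm (fderiv ℝ (fderiv ℝ g) (c x θ)) (cE θ)
            have h0 : (0:ℝ) ≤ ‖cE θ‖ := norm_nonneg _
            nlinarith [norm_nonneg (fderiv ℝ (fderiv ℝ g) (c x θ) (cE θ))]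
      _ ≤ M2 := by
            rw [cE_norm, mul_one, mul_one]; exact hM2 _ (hcK (hball hr hx).le θ)
    · exact intervalIntegrable_const
    · refine Filter.Eventually.of_forall fun θ _ x hx => ?_
      have hw := hcU (hball hr hx).le θ
      have hB' : HasDerivAt (fun t => fderiv ℝ g (c t θ))
          (fderiv ℝ (fderiv ℝ g) (c x θ) (cE θ)) x := by
        have := (hdiff1 _ hw).comp_hasDerivAt x (hc_dr x θ)
        simpa [Function.comp_def] using this
      have := hB'.clm_apply (hasDerivAt_const x (cE θ))
      simpa using this
  -- the FTC input: integral of the θ-derivative of η vanishes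
  have ftc : ∀ r ∈ s, (∫ θ in (-Real.pi)..Real.pi,
      (r • (fderiv ℝ (fderiv ℝ g) (c r θ) (Complex.I * cE θ) (Complex.I * cE θ))
        - fderiv ℝ g (c r θ) (cE θ))) = 0 := by
    intro r hr
    have hrle := (habs hr).le
    set η : ℝ → ℝ := fun θ => fderiv ℝ g (c r θ) (Complex.I * cE θ) with hηdef
    have hη : ∀ θ : ℝ, HasDerivAt η
        (r • (fderiv ℝ (fderiv ℝ g) (c r θ) (Complex.I * cE θ) (Complex.I * cE θ))
          - fderiv ℝ g (c r θ) (cE θ)) θ := by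
      intro θ
      have hw := hcU hrle θ
      have hB' : HasDerivAt (fun t => fderiv ℝ g (c r t))
          (fderiv ℝ (fderiv ℝ g) (c r θ) (r • (Complex.I * cE θ))) θ := by
        have := (hdiff1 _ hw).comp_hasDerivAt θ (hc_dθ r θ)
        simpa [Function.comp_def] using this
      have hv : HasDerivAt (fun t => Complex.I * cE t) (Complex.I * (Complex.I * cE θ)) θ :=
        (cE_hasDerivAt θ).const_mul Complex.I
      have := hB'.clm_apply hv
      have hIIE : Complex.I * (Complex.I * cE θ) = -(cE θ) := by
        rw [← mul_assoc, Complex.I_mul_I]; ring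
      rw [hIIE] at this
      have heq : (fderiv ℝ (fderiv ℝ g) (c r θ)) (r • (Complex.I * cE θ)) (Complex.I * cE θ)
          + (fderiv ℝ g (c r θ)) (-(cE θ))
          = r • ((fderiv ℝ (fderiv ℝ g) (c r θ)) (Complex.I * cE θ) (Complex.I * cE θ))
            - (fderiv ℝ g (c r θ)) (cE θ) := by
        rw [ContinuousLinearMap.map_smul, ContinuousLinearMap.smul_apply, map_neg]
        simp only [smul_eq_mul]
        ring
      rw [heq] at this
      exact this
    have hcont : Continuous (fun θ =>
        r • (fderiv ℝ (fderiv ℝ g) (c r θ) (Complex.I * cE θ) (Complex.I * cE θ))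
          - fderiv ℝ g (c r θ) (cE θ)) := by
      have hIE : Continuous (fun θ => Complex.I * cE θ) := continuous_const.mul cE_continuous
      exact ((((cont2 hrle).clm_apply hIE).clm_apply hIE).const_smul r).sub
        ((cont1 hrle).clm_apply cE_continuous)
    rw [intervalIntegral.integral_eq_sub_of_hasDerivAt (fun θ _ => hη θ)
      (hcont.intervalIntegrable _ _)]
    have : η Real.pi = η (-Real.pi) := by
      simp only [hηdef, hcdef, cE_pi_eq]
    rw [this, sub_self]
  -- nonnegativity of the derivative of n r = r * m1 r for r ≥ 0
  have hq : ∀ r ∈ s, 0 ≤ r → 0 ≤ m1 r + r * q r := by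
    intro r hr hr0
    have hrle := (habs hr).le
    have int1 : IntervalIntegrable (fun θ => fderiv ℝ g (c r θ) (cE θ)) volume
        (-Real.pi) Real.pi := ((cont1 hrle).clm_apply cE_continuous).intervalIntegrable _ _
    have int2 : IntervalIntegrable
        (fun θ => r • (fderiv ℝ (fderiv ℝ g) (c r θ) (cE θ) (cE θ))) volume
        (-Real.pi) Real.pi :=
      ((((cont2 hrle).clm_apply cE_continuous).clm_apply cE_continuous).const_smul
        r).intervalIntegrable _ _
    have int3 : IntervalIntegrable (fun θ =>
        r • (fderiv ℝ (fderiv ℝ g) (c r θ) (Complex.I * cE θ) (Complex.I * cE θ))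
          - fderiv ℝ g (c r θ) (cE θ)) volume (-Real.pi) Real.pi := by
      have hIE : Continuous (fun θ => Complex.I * cE θ) := continuous_const.mul cE_continuous
      exact (((((cont2 hrle).clm_apply hIE).clm_apply hIE).const_smul r).sub
        ((cont1 hrle).clm_apply cE_continuous)).intervalIntegrable _ _
    have e1 : m1 r + r * q r = ∫ θ in (-Real.pi)..Real.pi,
        (fderiv ℝ g (c r θ) (cE θ) + r • (fderiv ℝ (fderiv ℝ g) (c r θ) (cE θ) (cE θ))) := by
      rw [intervalIntegral.integral_add int1 int2, intervalIntegral.integral_smul, smul_eq_mul]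
    have e2 : m1 r + r * q r = ∫ θ in (-Real.pi)..Real.pi,
        ((fderiv ℝ g (c r θ) (cE θ) + r • (fderiv ℝ (fderiv ℝ g) (c r θ) (cE θ) (cE θ)))
          + (r • (fderiv ℝ (fderiv ℝ g) (c r θ) (Complex.I * cE θ) (Complex.I * cE θ))
            - fderiv ℝ g (c r θ) (cE θ))) := by
      rw [intervalIntegral.integral_add (int1.add int2) int3, ftc r hr, add_zero, e1]
    rw [e2]
    apply intervalIntegral.integral_nonneg (by linarith)
    intro θ _
    have hw := hcU hrle θ
    have : (fderiv ℝ g (c r θ) (cE θ) + r • (fderiv ℝ (fderiv ℝ g) (c r θ) (cE θ) (cE θ)))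
        + (r • (fderiv ℝ (fderiv ℝ g) (c r θ) (Complex.I * cE θ) (Complex.I * cE θ))
          - fderiv ℝ g (c r θ) (cE θ)) = r • (lap g (c r θ)) := by
      rw [lap_eq_s8 (diff_fderiv hU hg hw), ← circle_lap_aux (fderiv ℝ (fderiv ℝ g) (c r θ)) θ]
      simp only [smul_eq_mul]
      ring
    rw [this]
    exact mul_nonneg hr0 (hlap _ hw)
  -- monotonicity gives m r ≥ m 0
  have hIccs : Set.Icc (0:ℝ) R ⊆ s := fun x hx =>
    ⟨by linarith [hx.1], lt_of_le_of_lt hx.2 hRR'⟩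
  have hn' : ∀ x ∈ s, HasDerivAt (fun r => r * m1 r) (1 * m1 x + x * q x) x := by
    intro x hx
    simpa using (hasDerivAt_id x).fun_mul (hm1' x hx)
  have hmono_n : MonotoneOn (fun r => r * m1 r) (Set.Icc 0 R) := by
    apply monotoneOn_of_deriv_nonneg (convex_Icc 0 R)
    · intro x hx
      exact ((hn' x (hIccs hx)).continuousAt).continuousWithinAt
    · intro x hx
      rw [interior_Icc] at hx
      exact ((hn' x (hIccs ⟨hx.1.le, hx.2.le⟩)).differentiableAt).differentiableWithinAt
    · intro x hx
      rw [interior_Icc] at hx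
      have hxs := hIccs ⟨hx.1.le, hx.2.le⟩
      rw [(hn' x hxs).deriv]
      have := hq x hxs hx.1.le
      linarith
  have hm1_nonneg : ∀ r ∈ Set.Ioo (0:ℝ) R, 0 ≤ m1 r := by
    intro r hr
    have h0 : (0:ℝ) * m1 0 ≤ r * m1 r :=
      hmono_n ⟨le_rfl, hR.le⟩ ⟨hr.1.le, hr.2.le⟩ hr.1.le
    rw [zero_mul] at h0
    exact nonneg_of_mul_nonneg_right h0 hr.1
  have hmono_m : MonotoneOn m (Set.Icc 0 R) := by
    apply monotoneOn_of_deriv_nonneg (convex_Icc 0 R)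
    · intro x hx
      exact ((hm' x (hIccs hx)).continuousAt).continuousWithinAt
    · intro x hx
      rw [interior_Icc] at hx
      exact ((hm' x (hIccs ⟨hx.1.le, hx.2.le⟩)).differentiableAt).differentiableWithinAt
    · intro x hx
      rw [interior_Icc] at hx
      rw [(hm' x (hIccs ⟨hx.1.le, hx.2.le⟩)).deriv]
      exact hm1_nonneg x hx
  have hm0 : m 0 = (2 * Real.pi) * g z := by
    have : ∀ θ : ℝ, g (c 0 θ) = g z := by intro θ; simp [hcdef]
    rw [hmdef]
    simp only [this]
    rw [intervalIntegral.integral_const, smul_eq_mul]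
    ring
  have hm_ge : ∀ r ∈ Set.Icc (0:ℝ) R, (2 * Real.pi) * g z ≤ m r := by
    intro r hr
    rw [← hm0]
    exact hmono_m ⟨le_rfl, hR.le⟩ hr hr.1
  -- polar coordinates
  have hsymm : ∀ p : ℝ × ℝ, z + Complex.polarCoord.symm p = c p.1 p.2 := by
    intro p
    rw [Complex.polarCoord_symm_apply, hcdef]
    simp only [Complex.real_smul, cE]
    rw [Complex.exp_mul_I]
    push_cast
    ring
  set Φ : ℝ × ℝ → ℝ := fun p => p.1 • g (c p.1 p.2) with hΦdef
  set S : Set (ℝ × ℝ) := Set.Ioo 0 R ×ˢ Set.Ioo (-Real.pi) Real.pi with hSdef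
  have hmapsTo : ∀ p : ℝ × ℝ, p ∈ Set.Icc (0:ℝ) R ×ˢ Set.Icc (-Real.pi) Real.pi →
      c p.1 p.2 ∈ U := by
    intro p hp
    apply hcU (r := p.1) _ p.2
    rw [_root_.abs_of_nonneg hp.1.1]
    linarith [hp.1.2]
  have hΦcont : ContinuousOn Φ (Set.Icc (0:ℝ) R ×ˢ Set.Icc (-Real.pi) Real.pi) := by
    apply ContinuousOn.smul continuous_fst.continuousOn
    exact gc.comp hc_cont2.continuousOn hmapsTo
  have hΦint : IntegrableOn Φ S := by
    apply IntegrableOn.mono_set (hΦcont.integrableOn_compact (isCompact_Icc.prod isCompact_Icc))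
    exact Set.prod_mono Set.Ioo_subset_Icc_self Set.Ioo_subset_Icc_self
  -- Equality 1 : disk integral = ∫_S Φ
  set f0 : ℂ → ℝ := Set.indicator (ball (0:ℂ) R) (fun w => g (z + w)) with hf0def
  have hA : ∫ w in ball z R, g w = ∫ w, f0 w := by
    rw [← integral_indicator measurableSet_ball,
      ← integral_add_left_eq_self (Set.indicator (ball z R) g) z]
    congr 1
    funext x
    by_cases hx : x ∈ ball (0:ℂ) R
    · have hzx : z + x ∈ ball z R := by
        simpa [mem_ball, dist_eq_norm, add_sub_cancel_left] using hx
      rw [hf0def, Set.indicator_of_mem hzx, Set.indicator_of_mem hx]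
    · have hzx : z + x ∉ ball z R := by
        simp only [mem_ball, dist_eq_norm, add_sub_cancel_left] at hx ⊢
        simpa [dist_eq_norm] using hx
      rw [hf0def, Set.indicator_of_notMem hzx, Set.indicator_of_notMem hx]
  have hC : ∀ p ∈ polarCoord.target,
      p.1 • f0 (Complex.polarCoord.symm p) = Set.indicator S Φ p := by
    intro p hp
    rw [polarCoord_target] at hp
    have hp1 : 0 < p.1 := hp.1
    have habsp : ‖Complex.polarCoord.symm p‖ = |p.1| := Complex.norm_polarCoord_symm p
    by_cases hlt : p.1 < R
    · have hmem : Complex.polarCoord.symm p ∈ ball (0:ℂ) R := by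
        simp only [mem_ball, dist_eq_norm, sub_zero, habsp,
          _root_.abs_of_pos hp1]
        exact hlt
      have hpS : p ∈ S := ⟨⟨hp1, hlt⟩, hp.2⟩
      rw [hf0def, Set.indicator_of_mem hmem, Set.indicator_of_mem hpS, hsymm, hΦdef]
    · have hmem : Complex.polarCoord.symm p ∉ ball (0:ℂ) R := by
        simp only [mem_ball, dist_eq_norm, sub_zero, habsp,
          _root_.abs_of_pos hp1]
        exact fun h => hlt h
      have hpS : p ∉ S := fun h => hlt h.1.2
      rw [hf0def, Set.indicator_of_notMem hmem, Set.indicator_of_notMem hpS, smul_zero]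
  have hSsub : S ⊆ polarCoord.target := by
    rw [polarCoord_target]
    exact Set.prod_mono Set.Ioo_subset_Ioi_self subset_rfl
  have hEq1 : ∫ w in ball z R, g w = ∫ p in S, Φ p := by
    rw [hA, ← Complex.integral_comp_polarCoord_symm f0,
      setIntegral_congr_fun polarCoord.open_target.measurableSet hC,
      setIntegral_indicator (measurableSet_Ioo.prod measurableSet_Ioo)]
    rw [Set.inter_eq_self_of_subset_right hSsub]
  -- Equality 2 : ∫_S Φ = ∫ r in Ioo 0 R, r * m r
  have hinner : ∀ r : ℝ, (∫ θ in Set.Ioo (-Real.pi) Real.pi, r • g (c r θ)) = r * m r := by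
    intro r
    rw [integral_smul, smul_eq_mul]
    congr 1
    rw [hmdef]
    show _ = ∫ θ in (-Real.pi)..Real.pi, g (c r θ)
    rw [intervalIntegral.integral_of_le (by linarith), integral_Ioc_eq_integral_Ioo]
  have hvol : (volume : Measure (ℝ × ℝ)) = (volume : Measure ℝ).prod volume :=
    rfl
  have hΦint' : Integrable Φ
      (((volume : Measure ℝ).restrict (Set.Ioo 0 R)).prod
        ((volume : Measure ℝ).restrict (Set.Ioo (-Real.pi) Real.pi))) := by
    rw [Measure.prod_restrict]
    exact hΦint
  have hEq2 : ∫ p in S, Φ p = ∫ r in Set.Ioo (0:ℝ) R, r * m r := by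
    rw [hSdef, hvol, setIntegral_prod Φ]
    · apply setIntegral_congr_fun measurableSet_Ioo
      intro r _
      exact hinner r
    · exact hΦint
  have hrm_int : IntegrableOn (fun r => r * m r) (Set.Ioo (0:ℝ) R) := by
    have h1 := hΦint'.integral_prod_left
    have h2 : (fun r => ∫ θ in Set.Ioo (-Real.pi) Real.pi, Φ (r, θ)) = fun r => r * m r := by
      funext r
      exact hinner r
    rw [h2] at h1
    exact h1
  have hconst_int : IntegrableOn (fun r => (2 * Real.pi * g z) * r) (Set.Ioo (0:ℝ) R) := by
    apply IntegrableOn.mono_set _ Set.Ioo_subset_Icc_self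
    exact (continuous_const.mul continuous_id).continuousOn.integrableOn_compact isCompact_Icc
  have hcomp : ∫ r in Set.Ioo (0:ℝ) R, (2 * Real.pi * g z) * r ≤
      ∫ r in Set.Ioo (0:ℝ) R, r * m r := by
    apply setIntegral_mono_on hconst_int hrm_int measurableSet_Ioo
    intro r hr
    have h1 := hm_ge r ⟨hr.1.le, hr.2.le⟩
    have := mul_le_mul_of_nonneg_left h1 hr.1.le
    calc (2 * Real.pi * g z) * r = r * (2 * Real.pi * g z) := by ring
    _ ≤ r * m r := this
  have hleft : ∫ r in Set.Ioo (0:ℝ) R, (2 * Real.pi * g z) * r = g z * (Real.pi * R ^ 2) := by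
    rw [MeasureTheory.integral_const_mul]
    have : ∫ r in Set.Ioo (0:ℝ) R, r = R ^ 2 / 2 := by
      rw [← integral_Ioc_eq_integral_Ioo, ← intervalIntegral.integral_of_le hR.le,
        integral_id]
      ring
    rw [this]
    ring
  rw [hEq1, hEq2]
  rw [← hleft]
  exact hcomp


/-- If f ∈ C³(𝔻), Re[(Δf)_z conj(f_z) + (Δf)_z̄ conj(f_z̄)] ≥ 0 and
f ∈ 𝒟_{γ,2}(𝔻) (γ > 0), then ‖D_f(z)‖ ≤ C/(1-|z|)^{1+γ/2} on 𝔻. -/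
theorem dirichlet_implies_bloch (f : ℂ → ℂ) (γ : ℝ) (hγ : 0 < γ)
    (hf : ContDiffOn ℝ 3 f (ball (0:ℂ) 1))
    (hRe : ∀ z ∈ ball (0:ℂ) 1,
      0 ≤ (wd (lap f) z * (starRingEnd ℂ) (wd f z) +
            wdb (lap f) z * (starRingEnd ℂ) (wdb f z)).re)
    (hDir : IntegrableOn (fun z : ℂ => (1 - ‖z‖) ^ γ * (Dnorm f z) ^ 2)
      (ball (0:ℂ) 1)) :
    ∃ C : ℝ, 0 < C ∧ ∀ z ∈ ball (0:ℂ) 1,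
      Dnorm f z ≤ C / (1 - ‖z‖) ^ (1 + γ / 2) := by
  have pi_pos := Real.pi_pos
  set U : Set ℂ := ball (0:ℂ) 1 with hUdef
  have hU : IsOpen U := isOpen_ball
  set F : ℂ → ℝ := fun w => (wd f w).re * (wd f w).re + (wd f w).im * (wd f w).im +
    ((wdb f w).re * (wdb f w).re + (wdb f w).im * (wdb f w).im) with hFdef
  have hwd2 := contDiffOn_wd hU hf
  have hwdb2 := contDiffOn_wdb hU hf
  have hF2 : ContDiffOn ℝ 2 F U :=
    (((contDiffOn_re hwd2).mul (contDiffOn_re hwd2)).add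
      ((contDiffOn_im hwd2).mul (contDiffOn_im hwd2))).add
      (((contDiffOn_re hwdb2).mul (contDiffOn_re hwdb2)).add
        ((contDiffOn_im hwdb2).mul (contDiffOn_im hwdb2)))
  have hFlap : ∀ w ∈ U, 0 ≤ lap F w := fun w hw => lapF_nonneg hU hf hw (hRe w hw)
  have hFeq : ∀ w, F w = ‖wd f w‖ ^ 2 + ‖wdb f w‖ ^ 2 := by
    intro w
    rw [hFdef]
    have h1 : ‖wd f w‖ ^ 2 = Complex.normSq (wd f w) := by
      rw [Complex.sq_norm]
    have h2 : ‖wdb f w‖ ^ 2 = Complex.normSq (wdb f w) := by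
      rw [Complex.sq_norm]
    rw [h1, h2, Complex.normSq_apply, Complex.normSq_apply]
  have hFnonneg : ∀ w, 0 ≤ F w := by
    intro w
    rw [hFeq w]
    positivity
  have hFle : ∀ w, F w ≤ Dnorm f w ^ 2 := by
    intro w
    rw [hFeq w, Dnorm]
    nlinarith [norm_nonneg (wd f w), norm_nonneg (wdb f w)]
  have hDle : ∀ w, Dnorm f w ^ 2 ≤ 2 * F w := by
    intro w
    rw [hFeq w, Dnorm]
    nlinarith [sq_nonneg (‖wd f w‖ - ‖wdb f w‖)]
  have hDnonneg : ∀ w, 0 ≤ Dnorm f w := fun w => add_nonneg (norm_nonneg _) (norm_nonneg _)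
  set M : ℝ := ∫ w in U, (1 - ‖w‖) ^ γ * Dnorm f w ^ 2 with hMdef
  have hball_nonneg : ∀ w ∈ U, 0 ≤ (1 - ‖w‖) ^ γ * Dnorm f w ^ 2 := by
    intro w hw
    have : ‖w‖ < 1 := by simpa [hUdef, mem_ball, dist_eq_norm] using hw
    have h1 : (0:ℝ) ≤ 1 - ‖w‖ := by linarith
    exact mul_nonneg (Real.rpow_nonneg h1 γ) (sq_nonneg _)
  have hM0 : 0 ≤ M := setIntegral_nonneg measurableSet_ball hball_nonneg
  set K : ℝ := (2 * 2 ^ ((2:ℝ) + γ) / Real.pi) * M with hKdef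
  have hK0 : 0 ≤ K := by positivity
  refine ⟨Real.sqrt K + 1, by positivity, ?_⟩
  intro z hz
  have hz1 : ‖z‖ < 1 := by simpa [hUdef, mem_ball, dist_eq_norm] using hz
  have hd : 0 < 1 - ‖z‖ := by linarith
  set d : ℝ := 1 - ‖z‖ with hddef
  set R : ℝ := d / 2 with hRdef
  set R' : ℝ := 3 * d / 4 with hR'def
  have hR : 0 < R := by rw [hRdef]; linarith
  have hRR' : R < R' := by rw [hRdef, hR'def]; linarith
  have hcb : closedBall z R' ⊆ U := by
    intro w hw
    rw [mem_closedBall, dist_eq_norm] at hw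
    rw [hUdef, mem_ball, dist_eq_norm, sub_zero]
    calc ‖w‖ = ‖w - z + z‖ := by ring_nf
    _ ≤ ‖w - z‖ + ‖z‖ := norm_add_le _ _
    _ ≤ R' + ‖z‖ := by linarith
    _ < 1 := by rw [hR'def]; rw [hddef] at *; linarith
  have hcbR : closedBall z R ⊆ U := fun w hw =>
    hcb (closedBall_subset_closedBall hRR'.le hw)
  have hbR : ball z R ⊆ U := fun w hw => hcbR (ball_subset_closedBall hw)
  -- sub-mean value
  have hsm : F z * (Real.pi * R ^ 2) ≤ ∫ w in ball z R, F w :=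
    submean hU hF2 hFlap hR hRR' hcb
  -- pointwise comparison on the small ball
  have hpt : ∀ w ∈ ball z R, F w ≤ (R ^ γ)⁻¹ * ((1 - ‖w‖) ^ γ * Dnorm f w ^ 2) := by
    intro w hw
    rw [mem_ball, dist_eq_norm] at hw
    have hwle : R ≤ 1 - ‖w‖ := by
      have : ‖w‖ ≤ ‖z‖ + ‖w - z‖ := by
        calc ‖w‖ = ‖z + (w - z)‖ := by ring_nf
        _ ≤ ‖z‖ + ‖w - z‖ := norm_add_le _ _
      rw [hRdef] at *
      rw [hddef] at *
      linarith
    have h1 : R ^ γ ≤ (1 - ‖w‖) ^ γ := Real.rpow_le_rpow hR.le hwle hγ.le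
    have hRγ : 0 < R ^ γ := Real.rpow_pos_of_pos hR γ
    have h2 : 1 ≤ (R ^ γ)⁻¹ * (1 - ‖w‖) ^ γ := by
      calc (1:ℝ) = (R ^ γ)⁻¹ * R ^ γ := (inv_mul_cancel₀ hRγ.ne').symm
      _ ≤ (R ^ γ)⁻¹ * (1 - ‖w‖) ^ γ :=
        mul_le_mul_of_nonneg_left h1 (inv_nonneg.2 hRγ.le)
    calc F w ≤ Dnorm f w ^ 2 := hFle w
    _ = 1 * Dnorm f w ^ 2 := by ring
    _ ≤ ((R ^ γ)⁻¹ * (1 - ‖w‖) ^ γ) * Dnorm f w ^ 2 :=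
        mul_le_mul_of_nonneg_right h2 (sq_nonneg _)
    _ = (R ^ γ)⁻¹ * ((1 - ‖w‖) ^ γ * Dnorm f w ^ 2) := by ring
  -- integrability
  have hFint : IntegrableOn F (ball z R) :=
    (((hF2.continuousOn.mono hcbR).integrableOn_compact (isCompact_closedBall z R)).mono_set
      ball_subset_closedBall)
  have hGint : IntegrableOn (fun w => (1 - ‖w‖) ^ γ * Dnorm f w ^ 2) (ball z R) :=
    hDir.mono_set hbR
  have hGint' : IntegrableOn (fun w => (R ^ γ)⁻¹ * ((1 - ‖w‖) ^ γ * Dnorm f w ^ 2))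
      (ball z R) := hGint.const_mul _
  have hI1 : ∫ w in ball z R, F w ≤
      ∫ w in ball z R, (R ^ γ)⁻¹ * ((1 - ‖w‖) ^ γ * Dnorm f w ^ 2) :=
    setIntegral_mono_on hFint hGint' measurableSet_ball hpt
  have hI2 : ∫ w in ball z R, (1 - ‖w‖) ^ γ * Dnorm f w ^ 2 ≤ M := by
    rw [hMdef]
    apply setIntegral_mono_set hDir
    · exact (ae_restrict_iff' measurableSet_ball).2 (Filter.Eventually.of_forall hball_nonneg)
    · exact Filter.Eventually.of_forall fun w hw => hbR hw
  have hRγ : 0 < R ^ γ := Real.rpow_pos_of_pos hR γ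
  have key1 : F z * (Real.pi * R ^ 2) ≤ (R ^ γ)⁻¹ * M := by
    calc F z * (Real.pi * R ^ 2) ≤ ∫ w in ball z R, F w := hsm
    _ ≤ ∫ w in ball z R, (R ^ γ)⁻¹ * ((1 - ‖w‖) ^ γ * Dnorm f w ^ 2) := hI1
    _ = (R ^ γ)⁻¹ * ∫ w in ball z R, (1 - ‖w‖) ^ γ * Dnorm f w ^ 2 := by
        rw [MeasureTheory.integral_const_mul]
    _ ≤ (R ^ γ)⁻¹ * M := mul_le_mul_of_nonneg_left hI2 (inv_nonneg.2 hRγ.le)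
  -- main squared estimate
  have hde : (0:ℝ) < d ^ (1 + γ / 2) := Real.rpow_pos_of_pos hd _
  have hsq : (d ^ (1 + γ / 2)) ^ 2 = 2 ^ ((2:ℝ) + γ) * (R ^ 2 * R ^ γ) := by
    have h2R : d = 2 * R := by rw [hRdef]; ring
    rw [h2R, Real.mul_rpow (by norm_num) hR.le]
    rw [mul_pow]
    rw [← Real.rpow_natCast ((2:ℝ) ^ ((1:ℝ) + γ/2)) 2, ← Real.rpow_natCast (R ^ ((1:ℝ)+γ/2)) 2,
      ← Real.rpow_mul (by norm_num : (0:ℝ) ≤ 2), ← Real.rpow_mul hR.le]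
    have hexp : ((1:ℝ) + γ/2) * (2:ℕ) = 2 + γ := by push_cast; ring
    rw [hexp]
    congr 1
    rw [show ((2:ℝ) + γ) = (2:ℝ) + γ from rfl, Real.rpow_add hR]
    congr 1
    rw [← Real.rpow_natCast R 2]
    norm_num
  have key2 : (Dnorm f z * d ^ (1 + γ / 2)) ^ 2 ≤ K := by
    rw [mul_pow, hsq]
    have hstep : F z * (Real.pi * R ^ 2) * R ^ γ ≤ M := by
      have := mul_le_mul_of_nonneg_right key1 hRγ.le
      calc F z * (Real.pi * R ^ 2) * R ^ γ ≤ (R ^ γ)⁻¹ * M * R ^ γ := this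
      _ = M := by field_simp
    have hD2 : Dnorm f z ^ 2 ≤ 2 * F z := hDle z
    have h2γpos : (0:ℝ) < 2 ^ ((2:ℝ) + γ) := Real.rpow_pos_of_pos (by norm_num) _
    calc Dnorm f z ^ 2 * (2 ^ ((2:ℝ) + γ) * (R ^ 2 * R ^ γ))
        ≤ (2 * F z) * (2 ^ ((2:ℝ) + γ) * (R ^ 2 * R ^ γ)) := by
          apply mul_le_mul_of_nonneg_right hD2
          positivity
    _ = (2 * 2 ^ ((2:ℝ) + γ) / Real.pi) * (F z * (Real.pi * R ^ 2) * R ^ γ) := by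
          field_simp
    _ ≤ (2 * 2 ^ ((2:ℝ) + γ) / Real.pi) * M := by
          apply mul_le_mul_of_nonneg_left hstep
          positivity
    _ = K := by rw [hKdef]
  have hfinal : Dnorm f z * d ^ (1 + γ / 2) ≤ Real.sqrt K := by
    have ha : 0 ≤ Dnorm f z * d ^ (1 + γ / 2) := mul_nonneg (hDnonneg z) hde.le
    rw [← Real.sqrt_sq ha]
    exact Real.sqrt_le_sqrt key2
  rw [le_div_iff₀ hde]
  calc Dnorm f z * d ^ (1 + γ / 2) ≤ Real.sqrt K := hfinal
  _ ≤ Real.sqrt K + 1 := by linarith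
end
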